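/- Let D and D' be division rings, and let n, m', n' be integers with m', n' ≥ n ≥ 2. Suppose φ : D^{n×n} → D'^{m'×n'} is a graph homomorphism with φ(0) = 0 and there exists A₀ ∈ D^{n×n} with rank(φ(A₀)) = n. Assume M is a maximal set in D^{n×n} containing 0 and φ(M) ⊆ M', where M' is a maximal set in D'^{m'×n'}. Then φ(M) is not contained in any line of the affine geometry AG(M'), and M' is the unique maximal set of D'^{m'×n'} containing φ(M). -/

import Mathlib

open Matrix Function

/-- The rank of a matrix over a division ring: the dimension of its left row space. -/
noncomputable def rk {D : Type*} [DivisionRing D] {m n : ℕ}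
    (A : Matrix (Fin m) (Fin n) D) : ℕ :=
  Module.finrank D (Submodule.span D (Set.range fun i => A i))

/-- A nonempty set of matrices, any two distinct members of which are adjacent
(`rk (A - B) = 1`). -/
def IsAdjSet {D : Type*} [DivisionRing D] {m n : ℕ}
    (S : Set (Matrix (Fin m) (Fin n) D)) : Prop :=
  S.Nonempty ∧ ∀ A ∈ S, ∀ B ∈ S, A ≠ B → rk (A - B) = 1

/-- A maximal set: an adjacent set which is maximal under inclusion. -/
def IsMaxSet {D : Type*} [DivisionRing D] {m n : ℕ}
    (S : Set (Matrix (Fin m) (Fin n) D)) : Prop :=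
  IsAdjSet S ∧ ∀ T : Set (Matrix (Fin m) (Fin n) D), IsAdjSet T → S ⊆ T → T = S

/-- `M₁`: matrices whose rows other than the first are zero. -/
def M1set (D : Type*) [DivisionRing D] (m n : ℕ) : Set (Matrix (Fin m) (Fin n) D) :=
  {X | ∀ (i : Fin m) (j : Fin n), (i : ℕ) ≠ 0 → X i j = 0}

/-- `N₁`: matrices whose columns other than the first are zero. -/
def N1set (D : Type*) [DivisionRing D] (m n : ℕ) : Set (Matrix (Fin m) (Fin n) D) :=
  {X | ∀ (i : Fin m) (j : Fin n), (j : ℕ) ≠ 0 → X i j = 0}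

/-- A maximal set of type one: `P·M₁ + A` with `P` invertible. -/
def IsTypeOne {D : Type*} [DivisionRing D] {m n : ℕ}
    (S : Set (Matrix (Fin m) (Fin n) D)) : Prop :=
  ∃ (P : Matrix (Fin m) (Fin m) D) (A : Matrix (Fin m) (Fin n) D),
    IsUnit P ∧ S = (fun X => P * X + A) '' M1set D m n

/-- A maximal set of type two: `N₁·Q + A` with `Q` invertible. -/
def IsTypeTwo {D : Type*} [DivisionRing D] {m n : ℕ}
    (S : Set (Matrix (Fin m) (Fin n) D)) : Prop :=
  ∃ (Q : Matrix (Fin n) (Fin n) D) (A : Matrix (Fin m) (Fin n) D),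
    IsUnit Q ∧ S = (fun X => X * Q + A) '' N1set D m n

/-- Two maximal sets of different types. -/
def DiffTypes {D : Type*} [DivisionRing D] {m n : ℕ}
    (M N : Set (Matrix (Fin m) (Fin n) D)) : Prop :=
  (IsTypeOne M ∧ IsTypeTwo N) ∨ (IsTypeTwo M ∧ IsTypeOne N)

/-- The unit ball `B_A = D^{m×n}_{≤1} + A`. -/
def uball {D : Type*} [DivisionRing D] {m n : ℕ}
    (A : Matrix (Fin m) (Fin n) D) : Set (Matrix (Fin m) (Fin n) D) :=
  {X | rk (X - A) ≤ 1}

/-- A graph homomorphism: adjacency-preserving map. -/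
def IsGraphHom {D D' : Type*} [DivisionRing D] [DivisionRing D'] {m n m' n' : ℕ}
    (φ : Matrix (Fin m) (Fin n) D → Matrix (Fin m') (Fin n') D') : Prop :=
  ∀ A B, rk (A - B) = 1 → rk (φ A - φ B) = 1

/-- A degenerate graph homomorphism. -/
def Degenerate {D D' : Type*} [DivisionRing D] [DivisionRing D'] {m n m' n' : ℕ}
    (φ : Matrix (Fin m) (Fin n) D → Matrix (Fin m') (Fin n') D') : Prop :=
  ∃ (A : Matrix (Fin m) (Fin n) D) (M N : Set (Matrix (Fin m') (Fin n') D')),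
    rk A ≤ 1 ∧ DiffTypes M N ∧ φ '' uball A ⊆ M ∪ N ∧ φ A ∈ M ∩ N

/-- A (vertex) colouring: the image is an adjacent set. -/
def IsColouring {D D' : Type*} [DivisionRing D] [DivisionRing D'] {m n m' n' : ℕ}
    (φ : Matrix (Fin m) (Fin n) D → Matrix (Fin m') (Fin n') D') : Prop :=
  IsAdjSet (Set.range φ)

/-- A nonzero ring homomorphism. -/
def IsRingHomNZ {D D' : Type*} [DivisionRing D] [DivisionRing D'] (τ : D → D') : Prop :=
  (∀ x y, τ (x + y) = τ x + τ y) ∧ (∀ x y, τ (x * y) = τ x * τ y) ∧ τ ≠ 0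

/-- A nonzero ring anti-homomorphism. -/
def IsAntiRingHomNZ {D D' : Type*} [DivisionRing D] [DivisionRing D'] (σ : D → D') : Prop :=
  (∀ x y, σ (x + y) = σ x + σ y) ∧ (∀ x y, σ (x * y) = σ y * σ x) ∧ σ ≠ 0

/-- The `m × n` matrix with the matrix `Y` in the upper-left corner and zeros elsewhere. -/
def corner {D : Type*} [Zero D] {k l m n : ℕ} (Y : Matrix (Fin k) (Fin l) D) :
    Matrix (Fin m) (Fin n) D :=
  Matrix.of fun i j =>
    if hi : (i : ℕ) < k then if hj : (j : ℕ) < l then Y ⟨i, hi⟩ ⟨j, hj⟩ else 0 else 0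

/-- A line of the affine geometry `AG(M)` of a maximal set `M`: a nonempty intersection
`M ∩ N` with `N` a maximal set of the other type. -/
def IsLine {D : Type*} [DivisionRing D] {m n : ℕ}
    (M ℓ : Set (Matrix (Fin m) (Fin n) D)) : Prop :=
  ∃ N : Set (Matrix (Fin m) (Fin n) D), DiffTypes M N ∧ (M ∩ N).Nonempty ∧ ℓ = M ∩ N

/-- Condition (I). -/
def CondI {D D' : Type*} [DivisionRing D] [DivisionRing D'] {m n m' n' : ℕ}
    (φ : Matrix (Fin m) (Fin n) D → Matrix (Fin m') (Fin n') D') : Prop :=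
  ∀ M N : Set (Matrix (Fin m) (Fin n) D), DiffTypes M N → (0 : Matrix (Fin m) (Fin n) D) ∈ M ∩ N →
    ∃ M' N' : Set (Matrix (Fin m') (Fin n') D'),
      DiffTypes M' N' ∧ φ '' M ⊆ M' ∧ φ '' N ⊆ N'

/-- Condition (i) of the additive homomorphism theorem: `φ(X) = P X^τ Q`. -/
def Cond1 {D D' : Type*} [DivisionRing D] [DivisionRing D'] {m n m' n' : ℕ}
    (φ : Matrix (Fin m) (Fin n) D → Matrix (Fin m') (Fin n') D') : Prop :=
  ∃ (P : Matrix (Fin m') (Fin m) D') (Q : Matrix (Fin n) (Fin n') D') (τ : D → D'),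
    2 ≤ rk P ∧ 2 ≤ rk Q ∧ IsRingHomNZ τ ∧ ∀ X, φ X = P * X.map τ * Q

/-- Condition (ii) of the additive homomorphism theorem: `φ(X) = P (ᵗX^σ) Q`. -/
def Cond2 {D D' : Type*} [DivisionRing D] [DivisionRing D'] {m n m' n' : ℕ}
    (φ : Matrix (Fin m) (Fin n) D → Matrix (Fin m') (Fin n') D') : Prop :=
  ∃ (P : Matrix (Fin m') (Fin n) D') (Q : Matrix (Fin m) (Fin n') D') (σ : D → D'),
    2 ≤ rk P ∧ 2 ≤ rk Q ∧ IsAntiRingHomNZ σ ∧ ∀ X, φ X = P * (X.map σ)ᵀ * Q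

namespace Geom17

open Submodule

variable {D : Type*} [DivisionRing D] {m n : ℕ}

/-- outer product of a column and a row -/
def out (a : Fin m → D) (b : Fin n → D) : Matrix (Fin m) (Fin n) D :=
  Matrix.of fun i j => a i * b j

@[simp] lemma out_apply (a : Fin m → D) (b : Fin n → D) (i j) :
    out a b i j = a i * b j := rfl

lemma out_row (a : Fin m → D) (b : Fin n → D) (i) : out a b i = a i • b := by
  funext j; simp [out, Pi.smul_apply, smul_eq_mul]

lemma out_zero_right (a : Fin m → D) : out a (0 : Fin n → D) = 0 := by
  ext i j; simp [out]

lemma out_zero_left (b : Fin n → D) : out (0 : Fin m → D) b = 0 := by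
  ext i j; simp [out]

lemma out_sub_right (a : Fin m → D) (b b' : Fin n → D) :
    out a b - out a b' = out a (b - b') := by
  ext i j; simp [out, mul_sub]

lemma out_sub_left (a a' : Fin m → D) (b : Fin n → D) :
    out a b - out a' b = out (a - a') b := by
  ext i j; simp [out, sub_mul]

lemma rk_le_finrank (A : Matrix (Fin m) (Fin n) D) : rk A ≤ n := by
  have := Submodule.finrank_le (Submodule.span D (Set.range fun i => A i))
  simpa [rk, Module.finrank_fin_fun] using this

instance spanFD (A : Matrix (Fin m) (Fin n) D) :
    FiniteDimensional D (Submodule.span D (Set.range fun i => A i)) :=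
  FiniteDimensional.span_of_finite D (Set.finite_range _)

lemma rk_eq_zero_iff {A : Matrix (Fin m) (Fin n) D} : rk A = 0 ↔ A = 0 := by
  constructor
  · intro h
    have h' : Submodule.span D (Set.range fun i => A i) = ⊥ :=
      Submodule.finrank_eq_zero.1 h
    ext i j
    have : A i ∈ Submodule.span D (Set.range fun i => A i) :=
      Submodule.subset_span (Set.mem_range_self i)
    rw [h'] at this
    simpa using congrFun (Submodule.mem_bot D |>.1 this) j
  · rintro rfl
    have h1 : Submodule.span D (Set.range fun i => (0 : Matrix (Fin m) (Fin n) D) i) = ⊥ := by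
      apply le_bot_iff.1
      refine (Submodule.span_le.2 ?_)
      rintro x ⟨i, rfl⟩
      exact (⊥ : Submodule D (Fin n → D)).zero_mem
    rw [rk, h1]; simp

lemma rk_out_le_one (a : Fin m → D) (b : Fin n → D) : rk (out a b) ≤ 1 := by
  have hle : Submodule.span D (Set.range fun i => out a b i) ≤ D ∙ b := by
    refine Submodule.span_le.2 ?_
    rintro x ⟨i, rfl⟩
    show out a b i ∈ (D ∙ b : Submodule D (Fin n → D))
    rw [out_row]
    exact Submodule.smul_mem _ _ (Submodule.mem_span_singleton_self b)
  calc rk (out a b) ≤ Module.finrank D (D ∙ b) := by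
        apply Submodule.finrank_mono hle
    _ ≤ 1 := by
        by_cases hb : b = 0
        · subst hb; rw [Submodule.span_zero_singleton]; simp
        · rw [finrank_span_singleton hb]

lemma rk_out {a : Fin m → D} {b : Fin n → D} (ha : a ≠ 0) (hb : b ≠ 0) :
    rk (out a b) = 1 := by
  obtain ⟨i₀, hi₀⟩ : ∃ i, a i ≠ 0 := by
    by_contra h; push_neg at h; exact ha (funext h)
  have hspan : Submodule.span D (Set.range fun i => out a b i) = D ∙ b := by
    apply le_antisymm
    · refine Submodule.span_le.2 ?_
      rintro x ⟨i, rfl⟩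
      show out a b i ∈ (D ∙ b : Submodule D (Fin n → D))
      rw [out_row]
      exact Submodule.smul_mem _ _ (Submodule.mem_span_singleton_self b)
    · rw [Submodule.span_singleton_le_iff_mem]
      have hb' : b = (a i₀)⁻¹ • (out a b i₀) := by
        rw [out_row, smul_smul, inv_mul_cancel₀ hi₀, one_smul]
      have hmem : (a i₀)⁻¹ • (out a b i₀) ∈ Submodule.span D (Set.range fun i => out a b i) :=
        Submodule.smul_mem _ _ (Submodule.subset_span (Set.mem_range_self i₀))
      rwa [← hb'] at hmem
  rw [rk, hspan, finrank_span_singleton hb]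

lemma out_ne_zero {a : Fin m → D} {b : Fin n → D} (ha : a ≠ 0) (hb : b ≠ 0) :
    out a b ≠ 0 := by
  intro h
  have := rk_out ha hb
  rw [h, rk_eq_zero_iff.2 rfl] at this
  exact one_ne_zero this.symm

lemma rk_add_le (A B : Matrix (Fin m) (Fin n) D) : rk (A + B) ≤ rk A + rk B := by
  have hle : Submodule.span D (Set.range fun i => (A + B) i) ≤
      Submodule.span D (Set.range fun i => A i) ⊔ Submodule.span D (Set.range fun i => B i) := by
    refine Submodule.span_le.2 ?_
    rintro x ⟨i, rfl⟩
    show A i + B i ∈ (Submodule.span D (Set.range fun i => A i) ⊔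
        Submodule.span D (Set.range fun i => B i) : Submodule D (Fin n → D))
    exact Submodule.add_mem _
      (Submodule.mem_sup_left (Submodule.subset_span (Set.mem_range_self i)))
      (Submodule.mem_sup_right (Submodule.subset_span (Set.mem_range_self i)))
  calc rk (A + B) ≤ Module.finrank D
        ↥(Submodule.span D (Set.range fun i => A i) ⊔ Submodule.span D (Set.range fun i => B i)) :=
        Submodule.finrank_mono hle
    _ ≤ rk A + rk B := Submodule.finrank_add_le_finrank_add_finrank _ _


lemma sum_single_mul (i₀ : Fin m) (c : D) (f : Fin m → D) :
    ∑ i, (Pi.single i₀ c : Fin m → D) i * f i = c * f i₀ := by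
  rw [Finset.sum_eq_single i₀]
  · rw [Pi.single_eq_same]
  · intro b _ hb; rw [Pi.single_eq_of_ne hb, zero_mul]
  · intro h; exact absurd (Finset.mem_univ i₀) h

lemma sum_mul_single (i₀ : Fin m) (c : D) (f : Fin m → D) :
    ∑ i, f i * (Pi.single i₀ c : Fin m → D) i = f i₀ * c := by
  rw [Finset.sum_eq_single i₀]
  · rw [Pi.single_eq_same]
  · intro b _ hb; rw [Pi.single_eq_of_ne hb, mul_zero]
  · intro h; exact absurd (Finset.mem_univ i₀) h

lemma vecMul_eq_sum_smul (t : Fin m → D) (A : Matrix (Fin m) (Fin n) D) :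
    t ᵥ* A = ∑ i, t i • A i := by
  funext j
  rw [Finset.sum_apply]
  simp [Matrix.vecMul, dotProduct, smul_eq_mul]

/-- a nontrivial left linear relation among the rows bounds the rank by `m - 1`. -/
lemma rk_le_of_relation {A : Matrix (Fin m) (Fin n) D} {t : Fin m → D} (i₀ : Fin m)
    (ht : t i₀ ≠ 0) (hrel : ∑ i, t i • A i = 0) : rk A ≤ m - 1 := by
  classical
  set s : Finset (Fin n → D) := (Finset.univ.erase i₀).image (fun i => A i) with hs
  have hsub : Set.range (fun i => A i) ⊆ ↑(Submodule.span D (↑s : Set (Fin n → D))) := by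
    rintro x ⟨i, rfl⟩
    show A i ∈ Submodule.span D (↑s : Set (Fin n → D))
    by_cases hi : i = i₀
    · subst hi
      have h1 : t i • A i + ∑ j ∈ Finset.univ.erase i, t j • A j = 0 := by
        rw [Finset.add_sum_erase Finset.univ (fun j => t j • A j) (Finset.mem_univ i)]
        exact hrel
      have h2 : A i = (t i)⁻¹ • (-(∑ j ∈ Finset.univ.erase i, t j • A j)) := by
        have h3 : t i • A i = -(∑ j ∈ Finset.univ.erase i, t j • A j) :=
          eq_neg_of_add_eq_zero_left h1
        rw [← h3, smul_smul, inv_mul_cancel₀ ht, one_smul]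
      rw [h2]
      refine Submodule.smul_mem _ _ (Submodule.neg_mem _ (Submodule.sum_mem _ ?_))
      intro j hj
      refine Submodule.smul_mem _ _ (Submodule.subset_span ?_)
      exact Finset.mem_coe.2 (Finset.mem_image.2 ⟨j, hj, rfl⟩)
    · exact Submodule.subset_span
        (Finset.mem_coe.2 (Finset.mem_image.2 ⟨i, Finset.mem_erase.2 ⟨hi, Finset.mem_univ i⟩, rfl⟩))
  have hle : Submodule.span D (Set.range fun i => A i) ≤ Submodule.span D (↑s : Set (Fin n → D)) :=
    Submodule.span_le.2 hsub
  have h4 : rk A ≤ Module.finrank D (Submodule.span D (↑s : Set (Fin n → D))) := by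
    haveI : FiniteDimensional D (Submodule.span D (↑s : Set (Fin n → D))) :=
      FiniteDimensional.span_of_finite D s.finite_toSet
    exact Submodule.finrank_mono hle
  refine h4.trans ?_
  have h5 := finrank_span_finset_le_card (R := D) s
  refine le_trans h5 ?_
  calc s.card ≤ (Finset.univ.erase i₀).card := Finset.card_image_le
    _ = m - 1 := by rw [Finset.card_erase_of_mem (Finset.mem_univ i₀), Finset.card_univ,
        Fintype.card_fin]

lemma rk_add_ker (A : Matrix (Fin m) (Fin n) D) :
    rk A + Module.finrank D (LinearMap.ker A.vecMulLinear) = m := by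
  have h := LinearMap.finrank_range_add_finrank_ker A.vecMulLinear
  rw [range_vecMulLinear, Module.finrank_fin_fun] at h
  exact h


lemma rk_decomp (A : Matrix (Fin m) (Fin n) D) :
    ∃ (a : Fin (rk A) → Fin m → D) (c : Fin (rk A) → Fin n → D),
      (∀ j, a j ≠ 0) ∧ (∀ j, c j ≠ 0) ∧ A = ∑ j, out (a j) (c j) := by
  classical
  set V := Submodule.span D (Set.range fun i => A i) with hV
  haveI : FiniteDimensional D V := FiniteDimensional.span_of_finite D (Set.finite_range _)
  let b : Module.Basis (Fin (rk A)) D V :=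
    Module.finBasisOfFinrankEq D V (rfl : Module.finrank D V = rk A)
  let rowV : Fin m → V := fun i => ⟨A i, Submodule.subset_span ⟨i, rfl⟩⟩
  refine ⟨fun j => fun i => b.repr (rowV i) j, fun j => ((b j : V) : Fin n → D), ?_, ?_, ?_⟩
  · intro j hja
    have ha : ∀ i, b.repr (rowV i) j = 0 := fun i => congrFun hja i
    have hspan : Submodule.span D (Set.range rowV) = (⊤ : Submodule D V) := by
      apply Submodule.map_injective_of_injective (Submodule.injective_subtype V)
      rw [Submodule.map_span, Submodule.map_top, Submodule.range_subtype]
      have himg : V.subtype '' Set.range rowV = Set.range fun i => A i := by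
        rw [← Set.range_comp]
        rfl
      rw [himg, hV]
    have hker : Submodule.span D (Set.range rowV) ≤ LinearMap.ker (b.coord j) := by
      refine Submodule.span_le.2 ?_
      rintro x ⟨i, rfl⟩
      show rowV i ∈ LinearMap.ker (b.coord j)
      rw [LinearMap.mem_ker, Module.Basis.coord_apply, ha i]
    have hbj : b j ∈ LinearMap.ker (b.coord j) := hker (hspan ▸ Submodule.mem_top)
    rw [LinearMap.mem_ker, Module.Basis.coord_apply, Module.Basis.repr_self] at hbj
    simp at hbj
  · intro j hjc
    exact Module.Basis.ne_zero b j ((Submodule.coe_eq_zero).1 hjc)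
  · ext i jj
    have hx := b.sum_repr (rowV i)
    have hx' := congrArg (fun (v : V) => (v : Fin n → D) jj) hx
    simp only [Submodule.coe_sum, SetLike.val_smul, Finset.sum_apply, Pi.smul_apply,
      smul_eq_mul] at hx'
    rw [Matrix.sum_apply]
    change ((rowV i : V) : Fin n → D) jj = _
    rw [← hx']
    exact Finset.sum_congr rfl fun j _ => rfl

lemma rk_eq_one_out {A : Matrix (Fin m) (Fin n) D} (h : rk A = 1) :
    ∃ a b, a ≠ 0 ∧ b ≠ 0 ∧ A = out a b := by
  obtain ⟨a, c, ha, hc, hsum⟩ := rk_decomp A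
  revert a c
  rw [h]
  intro a c ha hc hsum
  refine ⟨a 0, c 0, ha 0, hc 0, ?_⟩
  rw [hsum, Fin.sum_univ_one]


lemma graphHom_contract {D' : Type*} [DivisionRing D'] {m' n' : ℕ}
    {φ : Matrix (Fin m) (Fin n) D → Matrix (Fin m') (Fin n') D'}
    (hφ : IsGraphHom φ) (X Y : Matrix (Fin m) (Fin n) D) :
    rk (φ X - φ Y) ≤ rk (X - Y) := by
  classical
  obtain ⟨a, c, ha, hc, hsum⟩ := rk_decomp (X - Y)
  let F : ℕ → Matrix (Fin m) (Fin n) D := fun jj =>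
    Y + ∑ j ∈ Finset.univ.filter (fun j : Fin (rk (X - Y)) => (j : ℕ) < jj), out (a j) (c j)
  have key : ∀ jj, jj ≤ rk (X - Y) → rk (φ (F jj) - φ Y) ≤ jj := by
    intro jj
    induction jj with
    | zero =>
      intro _
      have hF0 : F 0 = Y := by
        have : Finset.univ.filter (fun j : Fin (rk (X - Y)) => (j : ℕ) < 0) = ∅ := by
          ext x; simp
        simp only [F, this, Finset.sum_empty, add_zero]
      rw [hF0, sub_self, rk_eq_zero_iff.2 rfl]
    | succ jj ih =>
      intro hjj
      have hjj' : jj < rk (X - Y) := hjj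
      have hstep : F (jj + 1) - F jj = out (a ⟨jj, hjj'⟩) (c ⟨jj, hjj'⟩) := by
        have hfil : Finset.univ.filter (fun j : Fin (rk (X - Y)) => (j : ℕ) < jj + 1) =
            insert ⟨jj, hjj'⟩ (Finset.univ.filter (fun j : Fin (rk (X - Y)) => (j : ℕ) < jj)) := by
          ext x
          simp only [Finset.mem_filter, Finset.mem_insert, Finset.mem_univ, true_and,
            Fin.ext_iff]
          omega
        simp only [F, hfil]
        rw [Finset.sum_insert (by simp)]
        abel
      have h1 : rk (F (jj + 1) - F jj) = 1 := by rw [hstep]; exact rk_out (ha _) (hc _)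
      have h2 := hφ _ _ h1
      calc rk (φ (F (jj + 1)) - φ Y)
          = rk ((φ (F (jj + 1)) - φ (F jj)) + (φ (F jj) - φ Y)) := by
            rw [sub_add_sub_cancel]
        _ ≤ rk (φ (F (jj + 1)) - φ (F jj)) + rk (φ (F jj) - φ Y) := rk_add_le _ _
        _ ≤ 1 + jj := add_le_add (le_of_eq h2) (ih (le_of_lt hjj'))
        _ = jj + 1 := by omega
  have hFk : F (rk (X - Y)) = X := by
    have hfil : Finset.univ.filter (fun j : Fin (rk (X - Y)) => (j : ℕ) < rk (X - Y)) =
        Finset.univ := by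
      ext x; simp [x.isLt]
    simp only [F, hfil, ← hsum]
    abel
  have hfin := key (rk (X - Y)) le_rfl
  rwa [hFk] at hfin

/-- Two distinct points of a line through `0` cannot both drop the rank of `Z`. -/
lemma two_drop {m' n' : ℕ} {Z : Matrix (Fin m') (Fin n') D} {p : Fin m' → D} {q : Fin n' → D}
    {d₁ d₂ : D} {N : ℕ} (hN : 1 ≤ N) (hZ : rk Z = N)
    (h1 : rk (Z - out p (d₁ • q)) ≤ N - 1) (h2 : rk (Z - out p (d₂ • q)) ≤ N - 1)
    (hd : d₁ ≠ d₂) : False := by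
  classical
  set W := Z - out p (d₁ • q) with hW
  set W' := Z - out p (d₂ • q) with hW'
  -- q is not in the row space of W'
  have hq : q ∉ Submodule.span D (Set.range fun i => W' i) := by
    intro hqmem
    have hrows : ∀ i, Z i ∈ Submodule.span D (Set.range fun i => W' i) := by
      intro i
      have : Z i = W' i + (p i * d₂) • q := by
        funext j
        show Z i j = (Z i j - p i * (d₂ * q j)) + (p i * d₂) * q j
        rw [mul_assoc]
        abel
      rw [this]
      exact Submodule.add_mem _ (Submodule.subset_span ⟨i, rfl⟩)
        (Submodule.smul_mem _ _ hqmem)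
    have hle : Submodule.span D (Set.range fun i => Z i) ≤
        Submodule.span D (Set.range fun i => W' i) := by
      refine Submodule.span_le.2 ?_
      rintro x ⟨i, rfl⟩
      exact hrows i
    have := Submodule.finrank_mono (M := Fin n' → D) hle
    rw [← rk, ← rk] at this
    omega
  -- find t in the left kernel of W with t ⬝ p ≠ 0
  have hex : ∃ t : Fin m' → D, t ᵥ* W = 0 ∧ ∑ i, t i * p i ≠ 0 := by
    by_contra hcon
    push_neg at hcon
    have hker : LinearMap.ker W.vecMulLinear ≤ LinearMap.ker Z.vecMulLinear := by
      intro t htmem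
      rw [LinearMap.mem_ker, Matrix.vecMulLinear_apply] at htmem ⊢
      have hzero : ∑ i, t i * p i = 0 := hcon t htmem
      have hZt : Z = W + out p (d₁ • q) := by rw [hW]; abel
      rw [hZt, Matrix.vecMul_add, htmem, zero_add]
      funext j
      show ∑ i, t i * (p i * (d₁ * q j)) = 0
      calc ∑ i, t i * (p i * (d₁ * q j)) = (∑ i, t i * p i) * (d₁ * q j) := by
            rw [Finset.sum_mul]; exact Finset.sum_congr rfl fun i _ => (mul_assoc _ _ _).symm
        _ = 0 := by rw [hzero, zero_mul]
    have hkle := Submodule.finrank_mono (M := Fin m' → D) hker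
    have e1 := rk_add_ker W
    have e2 := rk_add_ker Z
    have hWle : rk W ≤ N - 1 := h1
    omega
  obtain ⟨t, htW, htp⟩ := hex
  -- then q lies in the row space of W'
  have houtsub : out p (d₁ • q) - out p (d₂ • q) = out p ((d₁ - d₂) • q) := by
    ext i j
    show p i * (d₁ * q j) - p i * (d₂ * q j) = p i * ((d₁ - d₂) * q j)
    rw [← mul_sub, ← sub_mul]
  have hWW' : W' = W + out p ((d₁ - d₂) • q) := by
    rw [hW, hW', ← houtsub]
    abel
  have htW' : t ᵥ* W' = ((∑ i, t i * p i) * (d₁ - d₂)) • q := by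
    rw [hWW', Matrix.vecMul_add, htW, zero_add]
    funext j
    show ∑ i, t i * (p i * ((d₁ - d₂) * q j)) = ((∑ i, t i * p i) * (d₁ - d₂)) * q j
    calc ∑ i, t i * (p i * ((d₁ - d₂) * q j)) = (∑ i, t i * p i) * ((d₁ - d₂) * q j) := by
          rw [Finset.sum_mul]; exact Finset.sum_congr rfl fun i _ => (mul_assoc _ _ _).symm
      _ = ((∑ i, t i * p i) * (d₁ - d₂)) * q j := (mul_assoc _ _ _).symm
  have hcne : (∑ i, t i * p i) * (d₁ - d₂) ≠ 0 :=
    mul_ne_zero htp (sub_ne_zero.2 hd)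
  have hqmem : q ∈ Submodule.span D (Set.range fun i => W' i) := by
    have hmem : t ᵥ* W' ∈ Submodule.span D (Set.range fun i => W' i) := by
      rw [vecMul_eq_sum_smul]
      exact Submodule.sum_mem _ fun i _ =>
        Submodule.smul_mem _ _ (Submodule.subset_span ⟨i, rfl⟩)
    rw [htW'] at hmem
    have := Submodule.smul_mem _ ((∑ i, t i * p i) * (d₁ - d₂))⁻¹ hmem
    rwa [smul_smul, inv_mul_cancel₀ hcne, one_smul] at this
  exact hq hqmem


lemma rk_ge_two {X : Matrix (Fin m) (Fin n) D} {b b' : Fin n → D}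
    (hb : b ≠ 0) (hb' : b' ∉ (D ∙ b))
    (hmb : b ∈ Submodule.span D (Set.range fun i => X i))
    (hmb' : b' ∈ Submodule.span D (Set.range fun i => X i)) : 2 ≤ rk X := by
  have hlt : (D ∙ b) < Submodule.span D (Set.range fun i => X i) := by
    refine lt_of_le_of_ne ?_ ?_
    · rw [Submodule.span_singleton_le_iff_mem]; exact hmb
    · intro he; rw [← he] at hmb'; exact hb' hmb'
  have h2 := Submodule.finrank_lt_finrank_of_lt hlt
  rw [finrank_span_singleton hb] at h2
  exact h2

lemma sum_two_mul (i₀ i₁ : Fin m) (hne : i₀ ≠ i₁) (α β : D) (f : Fin m → D) :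
    ∑ i, (if i = i₀ then α else if i = i₁ then β else 0) * f i = α * f i₀ + β * f i₁ := by
  classical
  rw [← Finset.sum_subset (Finset.subset_univ ({i₀, i₁} : Finset (Fin m)))]
  · rw [Finset.sum_pair hne]
    rw [if_pos rfl, if_neg (Ne.symm hne), if_pos rfl]
  · intro x _ hx
    simp only [Finset.mem_insert, Finset.mem_singleton] at hx
    push_neg at hx
    rw [if_neg hx.1, if_neg hx.2, zero_mul]

lemma vecMul_out (t a : Fin m → D) (b : Fin n → D) :
    t ᵥ* out a b = (∑ i, t i * a i) • b := by
  funext j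
  show ∑ i, t i * (a i * b j) = (∑ i, t i * a i) * b j
  rw [Finset.sum_mul]
  exact Finset.sum_congr rfl fun i _ => (mul_assoc _ _ _).symm

lemma vecMul_sub' (t : Fin m → D) (A B : Matrix (Fin m) (Fin n) D) :
    t ᵥ* (A - B) = t ᵥ* A - t ᵥ* B := by
  funext j
  show ∑ i, t i * (A i j - B i j) = (∑ i, t i * A i j) - ∑ i, t i * B i j
  rw [← Finset.sum_sub_distrib]
  exact Finset.sum_congr rfl fun i _ => mul_sub _ _ _

/-- two adjacent (or equal) rank-one matrices share a column direction or a row direction. -/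
lemma adjacent_outs {a a' : Fin m → D} {b b' : Fin n → D} (ha : a ≠ 0) (hb : b ≠ 0)
    (h : rk (out a b - out a' b') ≤ 1) :
    (∃ c : D, a' = fun i => a i * c) ∨ (∃ c : D, b' = c • b) := by
  classical
  by_contra hcon
  push_neg at hcon
  obtain ⟨hcol, hrow⟩ := hcon
  have hbmem : b' ∉ (D ∙ b) := by
    intro hmem
    obtain ⟨c, hc⟩ := Submodule.mem_span_singleton.1 hmem
    exact hrow c hc.symm
  obtain ⟨i₀, hai₀⟩ : ∃ i, a i ≠ 0 := by
    by_contra hcc; push_neg at hcc; exact ha (funext hcc)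
  set cc := (a i₀)⁻¹ * a' i₀ with hcc
  set a'' : Fin m → D := fun i => a' i - a i * cc with ha''def
  have h0 : a' i₀ = a i₀ * cc := by
    rw [hcc, ← mul_assoc, mul_inv_cancel₀ hai₀, one_mul]
  have ha''ne : a'' ≠ 0 := by
    intro hz
    apply hcol cc
    funext i
    have := congrFun hz i
    simp only [ha''def, Pi.zero_apply] at this
    linear_combination (norm := noncomm_ring) this
  obtain ⟨i₁, hai₁⟩ : ∃ i, a'' i ≠ 0 := by
    by_contra hcc2; push_neg at hcc2; exact ha''ne (funext hcc2)
  have hi₁₀ : i₀ ≠ i₁ := by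
    intro hEq
    apply hai₁
    rw [← hEq, ha''def]
    simp only
    rw [h0, sub_self]
  have h1 : a' i₁ = a i₁ * cc + a'' i₁ := by
    show a' i₁ = a i₁ * cc + (a' i₁ - a i₁ * cc)
    abel
  have hinv0 : ∀ x : D, x * (a i₀)⁻¹ * a i₀ = x := fun x => by
    rw [mul_assoc, inv_mul_cancel₀ hai₀, mul_one]
  have hinv1 : ∀ x : D, x * (a'' i₁)⁻¹ * a'' i₁ = x := fun x => by
    rw [mul_assoc, inv_mul_cancel₀ hai₁, mul_one]
  -- membership of combinations in the row space
  set X := out a b - out a' b' with hX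
  have hcomb : ∀ α β : D,
      (α * a i₀ + β * a i₁) • b - (α * a' i₀ + β * a' i₁) • b' ∈
        Submodule.span D (Set.range fun i => X i) := by
    intro α β
    set t : Fin m → D := fun i => if i = i₀ then α else if i = i₁ then β else 0 with ht
    have hmem : t ᵥ* X ∈ Submodule.span D (Set.range fun i => X i) := by
      rw [vecMul_eq_sum_smul]
      exact Submodule.sum_mem _ fun i _ =>
        Submodule.smul_mem _ _ (Submodule.subset_span ⟨i, rfl⟩)
    have heq : t ᵥ* X = (α * a i₀ + β * a i₁) • b - (α * a' i₀ + β * a' i₁) • b' := by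
      rw [hX, vecMul_sub', vecMul_out, vecMul_out, ht]
      rw [sum_two_mul i₀ i₁ hi₁₀ α β a, sum_two_mul i₀ i₁ hi₁₀ α β a']
    rwa [heq] at hmem
  -- first combination puts b in the row space
  have hbX : b ∈ Submodule.span D (Set.range fun i => X i) := by
    set β₁ := -(cc * (a'' i₁)⁻¹) with hβ₁
    set α₁ := (1 - β₁ * a i₁) * (a i₀)⁻¹ with hα₁
    have da : α₁ * a i₀ + β₁ * a i₁ = 1 := by
      rw [hα₁, hinv0, sub_add_cancel]
    have da' : α₁ * a' i₀ + β₁ * a' i₁ = 0 := by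
      rw [h0, h1]
      have expand : α₁ * (a i₀ * cc) + β₁ * (a i₁ * cc + a'' i₁) =
          (α₁ * a i₀ + β₁ * a i₁) * cc + β₁ * a'' i₁ := by noncomm_ring
      rw [expand, da, one_mul, hβ₁, neg_mul, hinv1, add_neg_cancel]
    have := hcomb α₁ β₁
    rwa [da, da', one_smul, zero_smul, sub_zero] at this
  -- second combination puts b' in the row space
  have hb'X : b' ∈ Submodule.span D (Set.range fun i => X i) := by
    set β₂ := (a'' i₁)⁻¹ with hβ₂
    set α₂ := (0 - β₂ * a i₁) * (a i₀)⁻¹ with hα₂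
    have da : α₂ * a i₀ + β₂ * a i₁ = 0 := by
      rw [hα₂, hinv0, sub_add_cancel]
    have da' : α₂ * a' i₀ + β₂ * a' i₁ = 1 := by
      rw [h0, h1]
      have expand : α₂ * (a i₀ * cc) + β₂ * (a i₁ * cc + a'' i₁) =
          (α₂ * a i₀ + β₂ * a i₁) * cc + β₂ * a'' i₁ := by noncomm_ring
      rw [expand, da, zero_mul, zero_add, hβ₂, inv_mul_cancel₀ hai₁]
    have := hcomb α₂ β₂
    rw [da, da', zero_smul, one_smul, zero_sub] at this
    exact (Submodule.neg_mem_iff _).1 this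
  have := rk_ge_two hb hbmem hbX hb'X
  omega


def Cset (u : Fin m → D) : Set (Matrix (Fin m) (Fin n) D) := {X | ∃ r, X = out u r}

def Rset (v : Fin n → D) : Set (Matrix (Fin m) (Fin n) D) := {X | ∃ c, X = out c v}

lemma zero_mem_Cset (u : Fin m → D) : (0 : Matrix (Fin m) (Fin n) D) ∈ Cset u :=
  ⟨0, (out_zero_right u).symm⟩

lemma zero_mem_Rset (v : Fin n → D) : (0 : Matrix (Fin m) (Fin n) D) ∈ Rset v :=
  ⟨0, (out_zero_left v).symm⟩

lemma isAdjSet_Cset {u : Fin m → D} (hu : u ≠ 0) :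
    IsAdjSet (Cset u : Set (Matrix (Fin m) (Fin n) D)) := by
  refine ⟨⟨0, zero_mem_Cset u⟩, ?_⟩
  rintro A ⟨r, rfl⟩ B ⟨r', rfl⟩ hne
  rw [out_sub_right]
  exact rk_out hu (sub_ne_zero.2 fun h => hne (by rw [h]))

lemma isAdjSet_Rset {v : Fin n → D} (hv : v ≠ 0) :
    IsAdjSet (Rset v : Set (Matrix (Fin m) (Fin n) D)) := by
  refine ⟨⟨0, zero_mem_Rset v⟩, ?_⟩
  rintro A ⟨c, rfl⟩ B ⟨c', rfl⟩ hne
  rw [out_sub_left]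
  exact rk_out (sub_ne_zero.2 fun h => hne (by rw [h])) hv

lemma maxset_structure {S : Set (Matrix (Fin m) (Fin n) D)} (hm : 0 < m) (hn : 0 < n)
    (hS : IsMaxSet S) (h0 : (0 : Matrix (Fin m) (Fin n) D) ∈ S) :
    (∃ u : Fin m → D, u ≠ 0 ∧ S = Cset u) ∨ (∃ v : Fin n → D, v ≠ 0 ∧ S = Rset v) := by
  classical
  have hrank : ∀ A ∈ S, A ≠ 0 → rk A = 1 := by
    intro A hA hAne
    have := hS.1.2 A hA 0 h0 hAne
    rwa [sub_zero] at this
  obtain ⟨A₁, hA₁S, hA₁ne⟩ : ∃ A ∈ S, A ≠ 0 := by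
    by_contra hno
    push_neg at hno
    have hS0 : S = {0} := Set.eq_singleton_iff_unique_mem.2 ⟨h0, fun x hx => hno x hx⟩
    set e₁ : Fin m → D := Pi.single ⟨0, hm⟩ 1 with he₁def
    set e₂ : Fin n → D := Pi.single ⟨0, hn⟩ 1 with he₂def
    have he₁ : e₁ ≠ 0 := by
      intro hz
      have := congrFun hz ⟨0, hm⟩
      rw [he₁def] at this
      simp [Pi.single_eq_same] at this
    have he₂ : e₂ ≠ 0 := by
      intro hz
      have := congrFun hz ⟨0, hn⟩
      rw [he₂def] at this
      simp [Pi.single_eq_same] at this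
    set E := out e₁ e₂ with hE
    have hEne : E ≠ 0 := out_ne_zero he₁ he₂
    have hT : IsAdjSet ({0, E} : Set (Matrix (Fin m) (Fin n) D)) := by
      refine ⟨⟨0, Or.inl rfl⟩, ?_⟩
      intro A hA B hB hne
      rcases hA with rfl | rfl <;> rcases hB with rfl | rfl
      · exact absurd rfl hne
      · rw [zero_sub, hE, show -out e₁ e₂ = out (-e₁) e₂ by ext i j; exact (neg_mul _ _).symm]
        exact rk_out (neg_ne_zero.2 he₁) he₂
      · rw [sub_zero, hE]
        exact rk_out he₁ he₂
      · exact absurd rfl hne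
    have hTeq := hS.2 _ hT (by rw [hS0]; intro x hx; rw [hx]; exact Or.inl rfl)
    rw [hS0] at hTeq
    have : E ∈ ({0} : Set (Matrix (Fin m) (Fin n) D)) := hTeq ▸ Or.inr rfl
    exact hEne this
  obtain ⟨a₁, b₁, ha₁, hb₁, hA₁eq⟩ := rk_eq_one_out (hrank A₁ hA₁S hA₁ne)
  by_cases hCiff : ∀ A ∈ S, ∃ r, A = out a₁ r
  · exact Or.inl ⟨a₁, ha₁, (hS.2 (Cset a₁) (isAdjSet_Cset ha₁) fun A hA => hCiff A hA).symm⟩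
  · push_neg at hCiff
    obtain ⟨A₂, hA₂S, hA₂n⟩ := hCiff
    have hA₂ne : A₂ ≠ 0 := by
      rintro rfl
      exact hA₂n 0 (out_zero_right a₁).symm
    obtain ⟨a₂, b₂, ha₂, hb₂, hA₂eq⟩ := rk_eq_one_out (hrank A₂ hA₂S hA₂ne)
    have h12ne : A₁ ≠ A₂ := by
      rintro rfl
      exact hA₂n b₁ hA₁eq
    have hadj12 : rk (out a₁ b₁ - out a₂ b₂) ≤ 1 := by
      rw [← hA₁eq, ← hA₂eq]
      exact le_of_eq (hS.1.2 A₁ hA₁S A₂ hA₂S h12ne)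
    have hb₂₁ : ∃ c : D, b₂ = c • b₁ := by
      rcases adjacent_outs ha₁ hb₁ hadj12 with ⟨c, hc⟩ | h
      · exfalso
        apply hA₂n (c • b₂)
        rw [hA₂eq, hc]
        ext i j
        exact mul_assoc _ _ _
      · exact h
    obtain ⟨c21, hc21⟩ := hb₂₁
    have hc21ne : c21 ≠ 0 := by
      rintro rfl
      rw [zero_smul] at hc21
      exact hb₂ hc21
    refine Or.inr ⟨b₁, hb₁, (hS.2 (Rset b₁) (isAdjSet_Rset hb₁) ?_).symm⟩
    intro A hAS
    by_cases hA0 : A = 0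
    · rw [hA0]; exact zero_mem_Rset b₁
    obtain ⟨a₃, b₃, ha₃, hb₃, hA₃⟩ := rk_eq_one_out (hrank A hAS hA0)
    have hgoal : ∀ c : D, b₃ = c • b₁ → A ∈ Rset b₁ := by
      intro c hc
      refine ⟨fun i => a₃ i * c, ?_⟩
      rw [hA₃, hc]
      ext i j
      exact (mul_assoc _ _ _).symm
    by_cases hA1 : A = A₁
    · rw [hA1, hA₁eq]; exact ⟨a₁, rfl⟩
    by_cases hA2 : A = A₂
    · rw [hA2, hA₂eq, hc21]
      refine ⟨fun i => a₂ i * c21, ?_⟩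
      ext i j
      exact (mul_assoc _ _ _).symm
    have had1 : rk (out a₁ b₁ - out a₃ b₃) ≤ 1 := by
      rw [← hA₁eq, ← hA₃]
      exact le_of_eq (hS.1.2 A₁ hA₁S A hAS fun h => hA1 h.symm)
    have had2 : rk (out a₂ b₂ - out a₃ b₃) ≤ 1 := by
      rw [← hA₂eq, ← hA₃]
      exact le_of_eq (hS.1.2 A₂ hA₂S A hAS fun h => hA2 h.symm)
    rcases adjacent_outs ha₁ hb₁ had1 with ⟨c, hc⟩ | ⟨c, hc⟩
    · rcases adjacent_outs ha₂ hb₂ had2 with ⟨c', hc'⟩ | ⟨c', hc'⟩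
      · exfalso
        have hcne : c ≠ 0 := by
          rintro rfl
          apply ha₃
          rw [hc]
          funext i
          exact mul_zero _
        have hc'ne : c' ≠ 0 := by
          rintro rfl
          apply ha₃
          rw [hc']
          funext i
          exact mul_zero _
        apply hA₂n ((c * c'⁻¹) • b₂)
        rw [hA₂eq]
        ext i j
        have hi : a₂ i * c' = a₁ i * c := (congrFun hc' i).symm.trans (congrFun hc i)
        have hi2 : a₂ i = a₁ i * c * c'⁻¹ := (eq_mul_inv_iff_mul_eq₀ hc'ne).2 hi
        show a₂ i * b₂ j = a₁ i * ((c * c'⁻¹) * b₂ j)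
        rw [hi2]
        noncomm_ring
      · exact hgoal (c' * c21) (by rw [hc', hc21, smul_smul])
    · exact hgoal c hc


lemma CR_inter {X : Matrix (Fin m) (Fin n) D} {p : Fin m → D} {q : Fin n → D}
    (h1 : ∃ r, X = out p r) (h2 : ∃ c, X = out c q) : ∃ d : D, X = out p (d • q) := by
  obtain ⟨r, rfl⟩ := h1
  obtain ⟨c, hc⟩ := h2
  by_cases hX : out p r = 0
  · exact ⟨0, by rw [hX, zero_smul, out_zero_right]⟩
  · obtain ⟨i₀, j₀, hij⟩ : ∃ i j, out p r i j ≠ 0 := by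
      by_contra hall
      push_neg at hall
      exact hX (by ext i j; exact hall i j)
    have hp : p i₀ ≠ 0 := fun h => hij (by show p i₀ * r j₀ = 0; rw [h, zero_mul])
    refine ⟨(p i₀)⁻¹ * c i₀, ?_⟩
    ext i j
    have hentry : p i₀ * r j = c i₀ * q j := congrFun (congrFun hc i₀) j
    have hr : r j = (p i₀)⁻¹ * c i₀ * q j := by
      rw [mul_assoc]
      exact (eq_inv_mul_iff_mul_eq₀ hp).2 hentry
    show p i * r j = p i * ((p i₀)⁻¹ * c i₀ * q j)
    rw [hr]

lemma C_eq_C {u₁ u₂ : Fin m → D} {r r' : Fin n → D}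
    (h : out u₁ r = out u₂ r') (hne : out u₁ r ≠ 0) :
    (Cset u₁ : Set (Matrix (Fin m) (Fin n) D)) = Cset u₂ := by
  obtain ⟨i₀, j₀, hij⟩ : ∃ i j, out u₁ r i j ≠ 0 := by
    by_contra hall
    push_neg at hall
    exact hne (by ext i j; exact hall i j)
  have h0 : u₁ i₀ * r j₀ = u₂ i₀ * r' j₀ := congrFun (congrFun h i₀) j₀
  have hr' : r' j₀ ≠ 0 := by
    intro hz
    rw [hz, mul_zero] at h0
    exact hij h0
  have hrj : r j₀ ≠ 0 := fun hz => hij (by show u₁ i₀ * r j₀ = 0; rw [hz, mul_zero])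
  have hcne : r j₀ * (r' j₀)⁻¹ ≠ 0 := mul_ne_zero hrj (inv_ne_zero hr')
  have hu₂ : ∀ i, u₂ i = u₁ i * (r j₀ * (r' j₀)⁻¹) := by
    intro i
    have hi : u₁ i * r j₀ = u₂ i * r' j₀ := congrFun (congrFun h i) j₀
    rw [← mul_assoc]
    exact (eq_mul_inv_iff_mul_eq₀ hr').2 hi.symm
  ext X
  constructor
  · rintro ⟨sX, rfl⟩
    refine ⟨(r j₀ * (r' j₀)⁻¹)⁻¹ • sX, ?_⟩
    ext i j
    show u₁ i * sX j = u₂ i * ((r j₀ * (r' j₀)⁻¹)⁻¹ * sX j)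
    rw [hu₂ i, mul_assoc, ← mul_assoc (r j₀ * (r' j₀)⁻¹) _ (sX j),
      mul_inv_cancel₀ hcne, one_mul]
  · rintro ⟨sX, rfl⟩
    refine ⟨(r j₀ * (r' j₀)⁻¹) • sX, ?_⟩
    ext i j
    show u₂ i * sX j = u₁ i * ((r j₀ * (r' j₀)⁻¹) * sX j)
    rw [hu₂ i, mul_assoc]

lemma R_eq_R {c c' : Fin m → D} {v₁ v₂ : Fin n → D}
    (h : out c v₁ = out c' v₂) (hne : out c v₁ ≠ 0) :
    (Rset v₁ : Set (Matrix (Fin m) (Fin n) D)) = Rset v₂ := by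
  obtain ⟨i₀, j₀, hij⟩ : ∃ i j, out c v₁ i j ≠ 0 := by
    by_contra hall
    push_neg at hall
    exact hne (by ext i j; exact hall i j)
  have hci : c i₀ ≠ 0 := fun hz => hij (by show c i₀ * v₁ j₀ = 0; rw [hz, zero_mul])
  have hv₁ : ∀ j, v₁ j = ((c i₀)⁻¹ * c' i₀) * v₂ j := by
    intro j
    have hj : c i₀ * v₁ j = c' i₀ * v₂ j := congrFun (congrFun h i₀) j
    rw [mul_assoc]
    exact (eq_inv_mul_iff_mul_eq₀ hci).2 hj
  have hv₁j₀ : v₁ j₀ ≠ 0 := fun hz => hij (by show c i₀ * v₁ j₀ = 0; rw [hz, mul_zero])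
  have hene : (c i₀)⁻¹ * c' i₀ ≠ 0 := by
    intro hz
    apply hv₁j₀
    rw [hv₁ j₀, hz, zero_mul]
  ext X
  constructor
  · rintro ⟨a, rfl⟩
    refine ⟨fun i => a i * ((c i₀)⁻¹ * c' i₀), ?_⟩
    ext i j
    show a i * v₁ j = (a i * ((c i₀)⁻¹ * c' i₀)) * v₂ j
    rw [hv₁ j, ← mul_assoc]
  · rintro ⟨a, rfl⟩
    refine ⟨fun i => a i * ((c i₀)⁻¹ * c' i₀)⁻¹, ?_⟩
    ext i j
    show a i * v₂ j = (a i * ((c i₀)⁻¹ * c' i₀)⁻¹) * v₁ j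
    rw [hv₁ j, ← mul_assoc, mul_assoc (a i) _ _, inv_mul_cancel₀ hene, mul_one]

lemma typeone_sub {S : Set (Matrix (Fin m) (Fin n) D)} (hm : 0 < m)
    (hT : IsTypeOne S) (h0 : (0 : Matrix (Fin m) (Fin n) D) ∈ S) :
    ∃ p : Fin m → D, S ⊆ Cset p := by
  obtain ⟨P, A, _hP, rfl⟩ := hT
  obtain ⟨X₀, hX₀, hA0⟩ := h0
  have hA : A = -(P * X₀) := eq_neg_of_add_eq_zero_right hA0
  refine ⟨fun i => P i ⟨0, hm⟩, ?_⟩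
  rintro X ⟨W, hW, rfl⟩
  refine ⟨fun j => (W - X₀) ⟨0, hm⟩ j, ?_⟩
  rw [hA]
  ext i j
  show (P * W) i j + (-(P * X₀)) i j = P i ⟨0, hm⟩ * (W - X₀) ⟨0, hm⟩ j
  rw [Matrix.neg_apply, Matrix.mul_apply, Matrix.mul_apply, ← sub_eq_add_neg,
    ← Finset.sum_sub_distrib]
  rw [Finset.sum_eq_single (⟨0, hm⟩ : Fin m)]
  · show P i ⟨0, hm⟩ * W ⟨0, hm⟩ j - P i ⟨0, hm⟩ * X₀ ⟨0, hm⟩ j = _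
    rw [← mul_sub]
    rfl
  · intro k _ hk
    have hk' : (k : ℕ) ≠ 0 := fun hzz => hk (Fin.ext hzz)
    rw [hW k j hk', hX₀ k j hk', mul_zero, sub_zero]
  · intro hnm
    exact absurd (Finset.mem_univ _) hnm

lemma typetwo_sub {S : Set (Matrix (Fin m) (Fin n) D)} (hn : 0 < n)
    (hT : IsTypeTwo S) (h0 : (0 : Matrix (Fin m) (Fin n) D) ∈ S) :
    ∃ q : Fin n → D, S ⊆ Rset q := by
  obtain ⟨Q, A, _hQ, rfl⟩ := hT
  obtain ⟨X₀, hX₀, hA0⟩ := h0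
  have hA : A = -(X₀ * Q) := eq_neg_of_add_eq_zero_right hA0
  refine ⟨fun j => Q ⟨0, hn⟩ j, ?_⟩
  rintro X ⟨W, hW, rfl⟩
  refine ⟨fun i => (W - X₀) i ⟨0, hn⟩, ?_⟩
  rw [hA]
  ext i j
  show (W * Q) i j + (-(X₀ * Q)) i j = (W - X₀) i ⟨0, hn⟩ * Q ⟨0, hn⟩ j
  rw [Matrix.neg_apply, Matrix.mul_apply, Matrix.mul_apply, ← sub_eq_add_neg,
    ← Finset.sum_sub_distrib]
  rw [Finset.sum_eq_single (⟨0, hn⟩ : Fin n)]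
  · show W i ⟨0, hn⟩ * Q ⟨0, hn⟩ j - X₀ i ⟨0, hn⟩ * Q ⟨0, hn⟩ j = _
    rw [← sub_mul]
    rfl
  · intro k _ hk
    have hk' : (k : ℕ) ≠ 0 := fun hzz => hk (Fin.ext hzz)
    rw [hW i k hk', hX₀ i k hk', zero_mul, sub_zero]
  · intro hnm
    exact absurd (Finset.mem_univ _) hnm


lemma exists_ne_fin {n : ℕ} (hn : 2 ≤ n) (i₀ : Fin n) : ∃ j : Fin n, j ≠ i₀ := by
  refine ⟨if h : (i₀ : ℕ) = 0 then ⟨1, by omega⟩ else ⟨0, by omega⟩, ?_⟩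
  split_ifs with h
  · intro he
    have := congrArg Fin.val he
    simp at this
    omega
  · intro he
    have := congrArg Fin.val he
    simp at this
    omega

lemma exists_two_near_C {nn : ℕ} {A₀ : Matrix (Fin nn) (Fin nn) D} {u : Fin nn → D}
    (hn : 2 ≤ nn) (hA : rk A₀ = nn) (hu : u ≠ 0) :
    ∃ B₁ B₂ : Matrix (Fin nn) (Fin nn) D, B₁ ∈ Cset u ∧ B₂ ∈ Cset u ∧ B₁ ≠ B₂ ∧
      rk (A₀ - B₁) ≤ nn - 1 ∧ rk (A₀ - B₂) ≤ nn - 1 := by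
  classical
  obtain ⟨i₀, hi₀⟩ : ∃ i, u i ≠ 0 := by
    by_contra hcc; push_neg at hcc; exact hu (funext hcc)
  obtain ⟨j₀, hj₀⟩ := exists_ne_fin hn i₀
  set t : Fin nn → D := Pi.single i₀ (u i₀)⁻¹ with htdef
  have hdot_t : ∑ i, t i * u i = 1 := by
    rw [htdef, sum_single_mul, inv_mul_cancel₀ hi₀]
  set s : Fin nn → D := Pi.single j₀ 1 - Pi.single i₀ (u j₀ * (u i₀)⁻¹) with hsdef
  have hs_j₀ : s j₀ = 1 := by
    rw [hsdef, Pi.sub_apply, Pi.single_eq_same, Pi.single_eq_of_ne hj₀, sub_zero]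
  have hdot_s : ∑ i, s i * u i = 0 := by
    rw [hsdef]
    simp only [Pi.sub_apply, sub_mul]
    rw [Finset.sum_sub_distrib, sum_single_mul, sum_single_mul, one_mul, mul_assoc,
      inv_mul_cancel₀ hi₀, mul_one, sub_self]
  set t' : Fin nn → D := t + s with ht'def
  have hdot_t' : ∑ i, t' i * u i = 1 := by
    rw [ht'def]
    simp only [Pi.add_apply, add_mul]
    rw [Finset.sum_add_distrib, hdot_t, hdot_s, add_zero]
  have ht'j₀ : t' j₀ = 1 := by
    rw [ht'def, Pi.add_apply, hs_j₀, htdef, Pi.single_eq_of_ne hj₀, zero_add]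
  have hti₀ : t i₀ ≠ 0 := by
    rw [htdef, Pi.single_eq_same]
    exact inv_ne_zero hi₀
  have hrel : ∀ w : Fin nn → D, (∑ i, w i * u i) = 1 →
      ∑ i, w i • ((A₀ - out u (w ᵥ* A₀)) i) = 0 := by
    intro w hw
    have h1 : ∑ i, w i • ((A₀ - out u (w ᵥ* A₀)) i) =
        (∑ i, w i • A₀ i) - ∑ i, w i • (out u (w ᵥ* A₀) i) := by
      rw [← Finset.sum_sub_distrib]
      exact Finset.sum_congr rfl fun i _ => smul_sub _ _ _
    have h2 : ∑ i, w i • (out u (w ᵥ* A₀) i) = (∑ i, w i * u i) • (w ᵥ* A₀) := by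
      rw [Finset.sum_smul]
      exact Finset.sum_congr rfl fun i _ => by rw [out_row, smul_smul]
    rw [h1, h2, hw, one_smul, ← vecMul_eq_sum_smul, sub_self]
  refine ⟨out u (t ᵥ* A₀), out u (t' ᵥ* A₀), ⟨_, rfl⟩, ⟨_, rfl⟩, ?_, ?_, ?_⟩
  · intro hEq
    have hsA : s ᵥ* A₀ ≠ 0 := by
      intro hz
      have hzz : ∑ i, s i • A₀ i = 0 := by rw [← vecMul_eq_sum_smul, hz]
      have := rk_le_of_relation j₀ (by rw [hs_j₀]; exact one_ne_zero) hzz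
      omega
    apply hsA
    have hr : s ᵥ* A₀ = t' ᵥ* A₀ - t ᵥ* A₀ := by
      rw [ht'def, Matrix.add_vecMul]
      abel
    have hj : ∀ j, (t ᵥ* A₀) j = (t' ᵥ* A₀) j := by
      intro j
      have := congrFun (congrFun hEq i₀) j
      exact mul_left_cancel₀ hi₀ this
    rw [hr]
    funext j
    show (t' ᵥ* A₀) j - (t ᵥ* A₀) j = 0
    rw [hj j, sub_self]
  · exact rk_le_of_relation i₀ hti₀ (hrel t hdot_t)
  · exact rk_le_of_relation j₀ (by rw [ht'j₀]; exact one_ne_zero) (hrel t' hdot_t')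

lemma exists_two_near_R {nn : ℕ} {A₀ : Matrix (Fin nn) (Fin nn) D} {v : Fin nn → D}
    (hn : 2 ≤ nn) (hA : rk A₀ = nn) (hv : v ≠ 0) :
    ∃ B₁ B₂ : Matrix (Fin nn) (Fin nn) D, B₁ ∈ Rset v ∧ B₂ ∈ Rset v ∧ B₁ ≠ B₂ ∧
      rk (A₀ - B₁) ≤ nn - 1 ∧ rk (A₀ - B₂) ≤ nn - 1 := by
  classical
  have htop : Submodule.span D (Set.range fun i => A₀ i) = ⊤ := by
    apply Submodule.eq_top_of_finrank_eq
    rw [Module.finrank_fin_fun]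
    exact hA
  have hv' : v ∈ Submodule.span D (Set.range fun i => A₀ i) := htop ▸ Submodule.mem_top
  obtain ⟨s, hs⟩ := mem_span_range_iff_exists_fun D |>.1 hv'
  obtain ⟨i₀, hsi₀⟩ : ∃ i, s i ≠ 0 := by
    by_contra hcc
    push_neg at hcc
    apply hv
    rw [← hs]
    rw [Finset.sum_eq_zero fun i _ => by rw [hcc i, zero_smul]]
  obtain ⟨j₀, hj₀⟩ := exists_ne_fin hn i₀
  set c : Fin nn → D := Pi.single i₀ (s i₀)⁻¹ with hcdef
  have hdc : ∑ i, s i * c i = 1 := by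
    rw [hcdef, sum_mul_single, mul_inv_cancel₀ hsi₀]
  set k : Fin nn → D := Pi.single j₀ 1 - Pi.single i₀ ((s i₀)⁻¹ * s j₀) with hkdef
  have hkj₀ : k j₀ = 1 := by
    rw [hkdef, Pi.sub_apply, Pi.single_eq_same, Pi.single_eq_of_ne hj₀, sub_zero]
  have hdk : ∑ i, s i * k i = 0 := by
    rw [hkdef]
    simp only [Pi.sub_apply, mul_sub]
    rw [Finset.sum_sub_distrib, sum_mul_single, sum_mul_single, mul_one, ← mul_assoc,
      mul_inv_cancel₀ hsi₀, one_mul, sub_self]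
  set c' : Fin nn → D := c + k with hc'def
  have hdc' : ∑ i, s i * c' i = 1 := by
    rw [hc'def]
    simp only [Pi.add_apply, mul_add]
    rw [Finset.sum_add_distrib, hdc, hdk, add_zero]
  have hrel : ∀ w : Fin nn → D, (∑ i, s i * w i) = 1 →
      ∑ i, s i • ((A₀ - out w v) i) = 0 := by
    intro w hw
    have h1 : ∑ i, s i • ((A₀ - out w v) i) =
        (∑ i, s i • A₀ i) - ∑ i, s i • (out w v i) := by
      rw [← Finset.sum_sub_distrib]
      exact Finset.sum_congr rfl fun i _ => smul_sub _ _ _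
    have h2 : ∑ i, s i • (out w v i) = (∑ i, s i * w i) • v := by
      rw [Finset.sum_smul]
      exact Finset.sum_congr rfl fun i _ => by rw [out_row, smul_smul]
    rw [h1, h2, hw, one_smul, hs, sub_self]
  refine ⟨out c v, out c' v, ⟨_, rfl⟩, ⟨_, rfl⟩, ?_, ?_, ?_⟩
  · intro hEq
    have hkne : k ≠ 0 := by
      intro hz
      have := congrFun hz j₀
      rw [hkj₀] at this
      exact one_ne_zero this
    have hck : c' - c = k := by rw [hc'def]; abel
    have h2 : out c' v - out c v = out (c' - c) v := out_sub_left _ _ _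
    rw [← hEq, sub_self, hck] at h2
    exact out_ne_zero hkne hv h2.symm
  · exact rk_le_of_relation i₀ hsi₀ (hrel c hdc)
  · exact rk_le_of_relation i₀ hsi₀ (hrel c' hdc')

end Geom17

open Geom17

/-- (Lemma `Recastatre43`) the image of a maximal set through `0` is not
contained in any line of `AG(M')`, and `M'` is the unique maximal set containing it. -/
theorem stmt17 {D D' : Type*} [DivisionRing D] [DivisionRing D'] {n m' n' : ℕ}
    (hn : 2 ≤ n) (hm' : n ≤ m') (hn' : n ≤ n')
    (φ : Matrix (Fin n) (Fin n) D → Matrix (Fin m') (Fin n') D')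
    (hhom : IsGraphHom φ) (h0 : φ 0 = 0)
    (A₀ : Matrix (Fin n) (Fin n) D) (hA₀ : rk (φ A₀) = n)
    (M : Set (Matrix (Fin n) (Fin n) D)) (hM : IsMaxSet M)
    (h0M : (0 : Matrix (Fin n) (Fin n) D) ∈ M)
    (M' : Set (Matrix (Fin m') (Fin n') D')) (hM' : IsMaxSet M')
    (hsub : φ '' M ⊆ M') :
    (∀ ℓ : Set (Matrix (Fin m') (Fin n') D'), IsLine M' ℓ → ¬ φ '' M ⊆ ℓ) ∧
    (∀ S : Set (Matrix (Fin m') (Fin n') D'), IsMaxSet S → φ '' M ⊆ S → S = M') := by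
  classical
  have hm0' : 0 < m' := by omega
  have hn0' : 0 < n' := by omega
  have hn0 : 0 < n := by omega
  have h0img : (0 : Matrix (Fin m') (Fin n') D') ∈ φ '' M := ⟨0, h0M, h0⟩
  have h0M' : (0 : Matrix (Fin m') (Fin n') D') ∈ M' := hsub h0img
  have hcont : ∀ X Y, rk (φ X - φ Y) ≤ rk (X - Y) := graphHom_contract hhom
  have hrkA₀ : rk A₀ = n := by
    have h1 : rk (φ A₀ - φ 0) ≤ rk (A₀ - 0) := hcont A₀ 0
    rw [h0, sub_zero, sub_zero, hA₀] at h1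
    have h2 : rk A₀ ≤ n := rk_le_finrank A₀
    omega
  have hMstruct := maxset_structure hn0 hn0 hM h0M
  have hCORE : ∀ (p : Fin m' → D') (q : Fin n' → D'),
      ¬ (∀ X ∈ M, ∃ d : D', φ X = out p (d • q)) := by
    intro p q hL
    obtain ⟨B₁, B₂, hB₁M, hB₂M, hBne, hr₁, hr₂⟩ :
        ∃ B₁ B₂, B₁ ∈ M ∧ B₂ ∈ M ∧ B₁ ≠ B₂ ∧ rk (A₀ - B₁) ≤ n - 1 ∧
          rk (A₀ - B₂) ≤ n - 1 := by
      rcases hMstruct with ⟨u, hu, hMeq⟩ | ⟨v, hv, hMeq⟩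
      · obtain ⟨B₁, B₂, h1, h2, h3, h4, h5⟩ := exists_two_near_C hn hrkA₀ hu
        exact ⟨B₁, B₂, by rw [hMeq]; exact h1, by rw [hMeq]; exact h2, h3, h4, h5⟩
      · obtain ⟨B₁, B₂, h1, h2, h3, h4, h5⟩ := exists_two_near_R hn hrkA₀ hv
        exact ⟨B₁, B₂, by rw [hMeq]; exact h1, by rw [hMeq]; exact h2, h3, h4, h5⟩
    obtain ⟨d₁, hd₁⟩ := hL B₁ hB₁M
    obtain ⟨d₂, hd₂⟩ := hL B₂ hB₂M
    have hφne : φ B₁ ≠ φ B₂ := by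
      intro hEq
      have hadj := hM.1.2 B₁ hB₁M B₂ hB₂M hBne
      have h1 := hhom _ _ hadj
      rw [hEq, sub_self] at h1
      rw [rk_eq_zero_iff.2 rfl] at h1
      exact zero_ne_one h1
    have hdne : d₁ ≠ d₂ := by
      rintro rfl
      exact hφne (hd₁.trans hd₂.symm)
    have hZ1 : rk (φ A₀ - out p (d₁ • q)) ≤ n - 1 := by
      rw [← hd₁]
      exact le_trans (hcont A₀ B₁) hr₁
    have hZ2 : rk (φ A₀ - out p (d₂ • q)) ≤ n - 1 := by
      rw [← hd₂]
      exact le_trans (hcont A₀ B₂) hr₂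
    exact two_drop (by omega : 1 ≤ n) hA₀ hZ1 hZ2 hdne
  have hCR : ∀ (p : Fin m' → D') (q : Fin n' → D'),
      (∀ X ∈ M, ∃ r, φ X = out p r) → (∀ X ∈ M, ∃ cc, φ X = out cc q) → False := by
    intro p q h1 h2
    exact hCORE p q fun X hX => CR_inter (h1 X hX) (h2 X hX)
  constructor
  · rintro ℓ ⟨N', hdiff, _hne, rfl⟩ hsubℓ
    have h0ℓ : (0 : Matrix (Fin m') (Fin n') D') ∈ M' ∩ N' := hsubℓ h0img
    rcases hdiff with ⟨hT1, hT2⟩ | ⟨hT2, hT1⟩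
    · obtain ⟨p, hp⟩ := typeone_sub hm0' hT1 h0ℓ.1
      obtain ⟨q, hq⟩ := typetwo_sub hn0' hT2 h0ℓ.2
      exact hCR p q (fun X hX => hp ((hsubℓ ⟨X, hX, rfl⟩).1))
        (fun X hX => hq ((hsubℓ ⟨X, hX, rfl⟩).2))
    · obtain ⟨q, hq⟩ := typetwo_sub hn0' hT2 h0ℓ.1
      obtain ⟨p, hp⟩ := typeone_sub hm0' hT1 h0ℓ.2
      exact hCR p q (fun X hX => hp ((hsubℓ ⟨X, hX, rfl⟩).2))
        (fun X hX => hq ((hsubℓ ⟨X, hX, rfl⟩).1))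
  · intro S hSmax hsubS
    have h0S : (0 : Matrix (Fin m') (Fin n') D') ∈ S := hsubS h0img
    have hSstruct := maxset_structure hm0' hn0' hSmax h0S
    have hM'struct := maxset_structure hm0' hn0' hM' h0M'
    obtain ⟨B, hBM, hφB⟩ : ∃ B ∈ M, φ B ≠ 0 := by
      obtain ⟨B, hBM, hBne⟩ : ∃ B ∈ M, B ≠ (0 : Matrix (Fin n) (Fin n) D) := by
        have hone : (Pi.single (⟨0, hn0⟩ : Fin n) (1 : D) : Fin n → D) ≠ 0 := by
          intro hz
          have := congrFun hz ⟨0, hn0⟩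
          rw [Pi.single_eq_same] at this
          exact one_ne_zero this
        rcases hMstruct with ⟨u, hu, hMeq⟩ | ⟨v, hv, hMeq⟩
        · exact ⟨out u (Pi.single ⟨0, hn0⟩ 1), by rw [hMeq]; exact ⟨_, rfl⟩,
            out_ne_zero hu hone⟩
        · exact ⟨out (Pi.single ⟨0, hn0⟩ 1) v, by rw [hMeq]; exact ⟨_, rfl⟩,
            out_ne_zero hone hv⟩
      refine ⟨B, hBM, ?_⟩
      intro hz
      have hadj := hM.1.2 B hBM 0 h0M hBne
      have h1 := hhom _ _ hadj
      rw [h0, sub_zero, hz, rk_eq_zero_iff.2 rfl] at h1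
      exact zero_ne_one h1
    have hφBS : ∀ T : Set (Matrix (Fin m') (Fin n') D'), φ '' M ⊆ T → φ B ∈ T :=
      fun T hT => hT ⟨B, hBM, rfl⟩
    rcases hSstruct with ⟨u₁, hu₁, hSeq⟩ | ⟨v₁, hv₁, hSeq⟩ <;>
      rcases hM'struct with ⟨u₂, hu₂, hM'eq⟩ | ⟨v₂, hv₂, hM'eq⟩
    · -- S = Cset u₁, M' = Cset u₂
      obtain ⟨r, hr⟩ : φ B ∈ Cset u₁ := by rw [← hSeq]; exact hφBS S hsubS
      obtain ⟨r', hr'⟩ : φ B ∈ Cset u₂ := by rw [← hM'eq]; exact hφBS M' hsub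
      rw [hSeq, hM'eq]
      exact C_eq_C (hr.symm.trans hr') (by rw [← hr]; exact hφB)
    · -- S = Cset u₁, M' = Rset v₂ : contradiction
      exact absurd (hCR u₁ v₂
        (fun X hX => by have := hsubS ⟨X, hX, rfl⟩; rwa [hSeq] at this)
        (fun X hX => by have := hsub ⟨X, hX, rfl⟩; rwa [hM'eq] at this)) (by simp)
    · -- S = Rset v₁, M' = Cset u₂ : contradiction
      exact absurd (hCR u₂ v₁
        (fun X hX => by have := hsub ⟨X, hX, rfl⟩; rwa [hM'eq] at this)
        (fun X hX => by have := hsubS ⟨X, hX, rfl⟩; rwa [hSeq] at this)) (by simp)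
    · -- S = Rset v₁, M' = Rset v₂
      obtain ⟨a, ha⟩ : φ B ∈ Rset v₁ := by rw [← hSeq]; exact hφBS S hsubS
      obtain ⟨a', ha'⟩ : φ B ∈ Rset v₂ := by rw [← hM'eq]; exact hφBS M' hsub
      rw [hSeq, hM'eq]
      exact R_eq_R (ha.symm.trans ha') (by rw [← ha]; exact hφB)
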